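/- Let n₁, n₂ ≥ 1 and n = n₁ + n₂. Let p₁ : Λ_n → Λ_{n₁} and p₂ : Λ_n → Λ_{n₂} be the ring homomorphisms induced by the coordinate projections (Fin n → ℤ) → (Fin n₁ → ℤ) and (Fin n → ℤ) → (Fin n₂ → ℤ) (identifying Fin n with Fin n₁ ⊕ Fin n₂). Let B₁ be any Λ_{n₁}-module and B₂ any Λ_{n₂}-module, and regard B = B₁ × B₂ as a Λ_n-module, with Λ_n acting on B₁ through p₁ and on B₂ through p₂. Then for every k ≥ 1 and every t = (t₁, t₂) ∈ (Fin n₁ → ℂˣ) × (Fin n₂ → ℂˣ) with t ≠ (1,1): Module.rank ℂ (ℂ_t ⊗[Λ_n] B) ≥ k if and only if (t₂ = 1 and Module.rank ℂ (ℂ_{t₁} ⊗[Λ_{n₁}] B₁) ≥ k) or (t₁ = 1 and Module.rank ℂ (ℂ_{t₂} ⊗[Λ_{n₂}] B₂) ≥ k). (This is the characteristic-variety product formula V_k(M₁ × M₂) = (V_k(M₁) × 1) ∪ (1 × V_k(M₂)), stated away from the identity character.) -/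

import Mathlib

noncomputable section

/-- The ring `Λ_n = ℂ[ℤⁿ]` of complex Laurent polynomials in `n` variables. -/
abbrev Lau (n : ℕ) : Type := AddMonoidAlgebra ℂ (Fin n → ℤ)

/-- The character of the lattice `ℤⁿ` determined by a point `t ∈ (ℂˣ)ⁿ`:
it sends `m : Fin n → ℤ` to `∏ i, (t i)^(m i)`. -/
def charUnits {n : ℕ} (t : Fin n → ℂˣ) : Multiplicative (Fin n → ℤ) →* ℂˣ :=
  ∏ i : Fin n, (zpowersHom ℂˣ (t i)).comp
    (AddMonoidHom.toMultiplicative (Pi.evalAddMonoidHom (fun _ : Fin n => ℤ) i))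

/-- The evaluation ring homomorphism `ε_t : Λ_n → ℂ`, sending the basis element
indexed by `m : Fin n → ℤ` to `∏ i, (t i)^(m i)`. -/
def epsHom {n : ℕ} (t : Fin n → ℂˣ) : Lau n →+* ℂ :=
  ((AddMonoidAlgebra.lift ℂ ℂ (Fin n → ℤ))
    ((Units.coeHom ℂ).comp (charUnits t))).toRingHom

/-- `ℂ_t`: the field `ℂ`, regarded as a `Λ_n`-module through `ε_t`. -/
def CV (n : ℕ) (t : Fin n → ℂˣ) : Type := ℂ

instance (n : ℕ) (t : Fin n → ℂˣ) : AddCommGroup (CV n t) :=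
  inferInstanceAs (AddCommGroup ℂ)

instance (n : ℕ) (t : Fin n → ℂˣ) : Module ℂ (CV n t) :=
  inferInstanceAs (Module ℂ ℂ)

instance (n : ℕ) (t : Fin n → ℂˣ) : Module (Lau n) (CV n t) :=
  Module.compHom ℂ (epsHom t)

instance (n : ℕ) (t : Fin n → ℂˣ) : SMulCommClass (Lau n) ℂ (CV n t) := by
  haveI h : SMulCommClass ℂ ℂ (CV n t) := inferInstanceAs (SMulCommClass ℂ ℂ ℂ)
  exact ⟨fun a c x => smul_comm (epsHom t a) c x⟩

/-- The coordinate projection `(Fin (n₁+n₂) → ℤ) →+ (Fin n₁ → ℤ)` onto the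
first block of coordinates. -/
def projAdd₁ (n₁ n₂ : ℕ) : (Fin (n₁ + n₂) → ℤ) →+ (Fin n₁ → ℤ) :=
  AddMonoidHom.mk' (fun m i => m (Fin.castAdd n₂ i)) (fun _ _ => rfl)

/-- The coordinate projection `(Fin (n₁+n₂) → ℤ) →+ (Fin n₂ → ℤ)` onto the
second block of coordinates. -/
def projAdd₂ (n₁ n₂ : ℕ) : (Fin (n₁ + n₂) → ℤ) →+ (Fin n₂ → ℤ) :=
  AddMonoidHom.mk' (fun m i => m (Fin.natAdd n₁ i)) (fun _ _ => rfl)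

/-- The induced ring homomorphism `p₁ : Λ_{n₁+n₂} → Λ_{n₁}`. -/
def projRing₁ (n₁ n₂ : ℕ) : Lau (n₁ + n₂) →+* Lau n₁ :=
  AddMonoidAlgebra.mapDomainRingHom ℂ (projAdd₁ n₁ n₂)

/-- The induced ring homomorphism `p₂ : Λ_{n₁+n₂} → Λ_{n₂}`. -/
def projRing₂ (n₁ n₂ : ℕ) : Lau (n₁ + n₂) →+* Lau n₂ :=
  AddMonoidAlgebra.mapDomainRingHom ℂ (projAdd₂ n₁ n₂)


lemma epsHom_single {n : ℕ} (t : Fin n → ℂˣ) (m : Fin n → ℤ) (b : ℂ) :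
    epsHom t (AddMonoidAlgebra.single m b) = b * ∏ i, (t i : ℂ) ^ (m i) := by
  simp [epsHom, charUnits, AddMonoidAlgebra.lift_single, MonoidHom.finset_prod_apply,
    smul_eq_mul]

lemma eps_eq₁ (n₁ n₂ : ℕ) (t₁ : Fin n₁ → ℂˣ) :
    epsHom (Fin.addCases (motive := fun _ => ℂˣ) t₁ (1 : Fin n₂ → ℂˣ))
      = (epsHom t₁).comp (projRing₁ n₁ n₂) := by
  apply AddMonoidAlgebra.ringHom_ext
  · intro b
    simp [epsHom_single, projRing₁, AddMonoidAlgebra.mapDomain_single]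
    try simp [projAdd₁, epsHom_single]
  · intro m
    simp only [epsHom_single, one_mul, RingHom.comp_apply, projRing₁,
      AddMonoidAlgebra.mapDomainRingHom_apply, AddMonoidAlgebra.mapDomain_single]
    rw [Fin.prod_univ_add]
    try simp [projAdd₁, epsHom_single]

lemma eps_eq₂ (n₁ n₂ : ℕ) (t₂ : Fin n₂ → ℂˣ) :
    epsHom (Fin.addCases (motive := fun _ => ℂˣ) (1 : Fin n₁ → ℂˣ) t₂)
      = (epsHom t₂).comp (projRing₂ n₁ n₂) := by
  apply AddMonoidAlgebra.ringHom_ext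
  · intro b
    simp [epsHom_single, projRing₂, AddMonoidAlgebra.mapDomain_single]
    try simp [projAdd₂, epsHom_single]
  · intro m
    simp only [epsHom_single, one_mul, RingHom.comp_apply, projRing₂,
      AddMonoidAlgebra.mapDomainRingHom_apply, AddMonoidAlgebra.mapDomain_single]
    rw [Fin.prod_univ_add]
    try simp [projAdd₂, epsHom_single]
open TensorProduct in
lemma tensor_vanish {R M B : Type} [CommRing R] [AddCommGroup M] [Module R M]
    [Module ℂ M] [SMulCommClass R ℂ M] [AddCommGroup B] [Module R B]
    (a : R) (c : ℂ) (hc : c ≠ 1)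
    (hM : ∀ x : M, a • x = c • x) (hB : ∀ b : B, a • b = b) :
    Subsingleton (M ⊗[R] B) := by
  have key : ∀ z : M ⊗[R] B, c • z = z := by
    intro z
    induction z using TensorProduct.induction_on with
    | zero => simp
    | tmul x b =>
        rw [TensorProduct.smul_tmul', ← hM, TensorProduct.smul_tmul, hB]
    | add u v hu hv => rw [smul_add, hu, hv]
  have hz : ∀ z : M ⊗[R] B, z = 0 := by
    intro z
    have h1 : (c - 1) • z = 0 := by rw [sub_smul, one_smul, key, sub_self]
    have h2 := congrArg (fun y => (c - 1)⁻¹ • y) h1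
    simpa [smul_smul, inv_mul_cancel₀ (sub_ne_zero.mpr hc)] using h2
  exact ⟨fun z w => by rw [hz z, hz w]⟩

open TensorProduct in
lemma tensor_comp_equiv {R S M M' B : Type} [CommRing R] [CommRing S]
    [AddCommGroup M] [Module R M] [Module ℂ M] [SMulCommClass R ℂ M]
    [AddCommGroup M'] [Module S M'] [Module ℂ M'] [SMulCommClass S ℂ M']
    [AddCommGroup B] [Module R B] [Module S B]
    (p : R →+* S) (hp : Function.Surjective p)
    (e : M ≃ₗ[ℂ] M')
    (he : ∀ (r : R) (x : M), e (r • x) = p r • e x)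
    (hB : ∀ (r : R) (b : B), r • b = p r • b) :
    Nonempty ((M ⊗[R] B) ≃ₗ[ℂ] (M' ⊗[S] B)) := by
  have hsymm : ∀ (r : R) (x' : M'), e.symm (p r • x') = r • e.symm x' := by
    intro r x'
    apply e.injective
    rw [he, e.apply_symm_apply, e.apply_symm_apply]
  let F : M →+ B →+ (M' ⊗[S] B) :=
    AddMonoidHom.mk'
      (fun x => AddMonoidHom.mk' (fun b => e x ⊗ₜ[S] b)
        (fun b₁ b₂ => by simp [TensorProduct.tmul_add]))
      (fun x₁ x₂ => AddMonoidHom.ext fun b => by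
        simp [map_add, TensorProduct.add_tmul])
  have hF : ∀ (r : R) (x : M) (b : B), F (r • x) b = F x (r • b) := by
    intro r x b
    show e (r • x) ⊗ₜ[S] b = e x ⊗ₜ[S] (r • b)
    rw [he, hB, TensorProduct.smul_tmul]
  let G : M' →+ B →+ (M ⊗[R] B) :=
    AddMonoidHom.mk'
      (fun x' => AddMonoidHom.mk' (fun b => e.symm x' ⊗ₜ[R] b)
        (fun b₁ b₂ => by simp [TensorProduct.tmul_add]))
      (fun x₁ x₂ => AddMonoidHom.ext fun b => by
        simp [map_add, TensorProduct.add_tmul])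
  have hG : ∀ (s : S) (x' : M') (b : B), G (s • x') b = G x' (s • b) := by
    intro s x' b
    obtain ⟨r, rfl⟩ := hp s
    show e.symm (p r • x') ⊗ₜ[R] b = e.symm x' ⊗ₜ[R] (p r • b)
    rw [hsymm, ← hB, TensorProduct.smul_tmul]
  let f := TensorProduct.liftAddHom F hF
  let g := TensorProduct.liftAddHom G hG
  have hgf : ∀ z, g (f z) = z := by
    intro z
    induction z using TensorProduct.induction_on with
    | zero => simp
    | tmul x b => show g (e x ⊗ₜ[S] b) = x ⊗ₜ[R] b; simp [g, G]
    | add u v hu hv => rw [map_add, map_add, hu, hv]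
  have hfg : ∀ z, f (g z) = z := by
    intro z
    induction z using TensorProduct.induction_on with
    | zero => simp
    | tmul x b => show f (e.symm x ⊗ₜ[R] b) = x ⊗ₜ[S] b; simp [f, F]
    | add u v hu hv => rw [map_add, map_add, hu, hv]
  refine ⟨{ toFun := f, invFun := g, left_inv := hgf, right_inv := hfg,
            map_add' := f.map_add, map_smul' := ?_ }⟩
  intro c z
  induction z using TensorProduct.induction_on with
  | zero => simp
  | tmul x b =>
      rw [TensorProduct.smul_tmul']
      show f ((c • x) ⊗ₜ[R] b) = c • f (x ⊗ₜ[R] b)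
      show e (c • x) ⊗ₜ[S] b = c • (e x ⊗ₜ[S] b)
      rw [map_smul, TensorProduct.smul_tmul']
  | add u v hu hv =>
      simp only [smul_add, map_add]
      exact congrArg₂ (· + ·) hu hv

open TensorProduct in
lemma prodRightC {R M B₁ B₂ : Type} [CommRing R] [AddCommGroup M] [Module R M]
    [Module ℂ M] [SMulCommClass R ℂ M]
    [AddCommGroup B₁] [Module R B₁] [AddCommGroup B₂] [Module R B₂] :
    Nonempty ((M ⊗[R] (B₁ × B₂)) ≃ₗ[ℂ] (M ⊗[R] B₁) × (M ⊗[R] B₂)) := by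
  let e0 := TensorProduct.prodRight R R M B₁ B₂
  refine ⟨{ toFun := e0, invFun := e0.symm, left_inv := e0.left_inv,
            right_inv := e0.right_inv, map_add' := e0.map_add, map_smul' := ?_ }⟩
  intro c z
  induction z using TensorProduct.induction_on with
  | zero => simp
  | tmul x b =>
      obtain ⟨b₁, b₂⟩ := b
      rw [TensorProduct.smul_tmul']
      show e0 ((c • x) ⊗ₜ[R] (b₁, b₂)) = c • e0 (x ⊗ₜ[R] (b₁, b₂))
      simp only [TensorProduct.prodRight_tmul, e0, Prod.smul_mk,
        TensorProduct.smul_tmul']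
  | add u v hu hv =>
      simp only [smul_add, map_add]
      exact congrArg₂ (· + ·) hu hv

lemma prod_fst_equiv {V W : Type} [AddCommGroup V] [Module ℂ V]
    [AddCommGroup W] [Module ℂ W] [Subsingleton W] :
    Nonempty ((V × W) ≃ₗ[ℂ] V) :=
  ⟨{ toFun := Prod.fst, invFun := fun v => (v, 0),
     map_add' := fun _ _ => rfl, map_smul' := fun _ _ => rfl,
     left_inv := fun z => Prod.ext rfl (Subsingleton.elim _ _),
     right_inv := fun _ => rfl }⟩

lemma prod_snd_equiv {V W : Type} [AddCommGroup V] [Module ℂ V]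
    [AddCommGroup W] [Module ℂ W] [Subsingleton V] :
    Nonempty ((V × W) ≃ₗ[ℂ] W) :=
  ⟨{ toFun := Prod.snd, invFun := fun w => (0, w),
     map_add' := fun _ _ => rfl, map_smul' := fun _ _ => rfl,
     left_inv := fun z => Prod.ext (Subsingleton.elim _ _) rfl,
     right_inv := fun _ => rfl }⟩
lemma CV_smul {n : ℕ} (t : Fin n → ℂˣ) (a : Lau n) (x : CV n t) :
    a • x = epsHom t a • x := rfl

lemma eps_single_single {n : ℕ} (t : Fin n → ℂˣ) (k : Fin n) :
    epsHom t (AddMonoidAlgebra.single (Pi.single k (1 : ℤ)) 1) = (t k : ℂ) := by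
  rw [epsHom_single, one_mul, Finset.prod_eq_single k]
  · simp
  · intro i _ hne
    rw [Pi.single_eq_of_ne hne]; simp
  · simp

lemma projRing₂_single₁ (n₁ n₂ : ℕ) (i₀ : Fin n₁) :
    projRing₂ n₁ n₂ (AddMonoidAlgebra.single (Pi.single (Fin.castAdd n₂ i₀) (1 : ℤ)) 1) = 1 := by
  have hne : ∀ j : Fin n₂, Fin.natAdd n₁ j ≠ Fin.castAdd n₂ i₀ := by
    intro j h
    have h1 := congrArg Fin.val h
    have h2 := i₀.is_lt
    simp [Fin.natAdd, Fin.castAdd, Fin.castLE] at h1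
    omega
  have h : projAdd₂ n₁ n₂ (Pi.single (Fin.castAdd n₂ i₀) (1 : ℤ)) = 0 := by
    funext j
    simp only [projAdd₂, AddMonoidHom.mk'_apply, Pi.zero_apply]
    exact Pi.single_eq_of_ne (hne j) 1
  simp [projRing₂, AddMonoidAlgebra.mapDomain_single, h, AddMonoidAlgebra.one_def]

lemma projRing₁_single₂ (n₁ n₂ : ℕ) (j₀ : Fin n₂) :
    projRing₁ n₁ n₂ (AddMonoidAlgebra.single (Pi.single (Fin.natAdd n₁ j₀) (1 : ℤ)) 1) = 1 := by
  have hne : ∀ i : Fin n₁, Fin.castAdd n₂ i ≠ Fin.natAdd n₁ j₀ := by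
    intro i h
    have h1 := congrArg Fin.val h
    have h2 := i.is_lt
    simp [Fin.natAdd, Fin.castAdd, Fin.castLE] at h1
    omega
  have h : projAdd₁ n₁ n₂ (Pi.single (Fin.natAdd n₁ j₀) (1 : ℤ)) = 0 := by
    funext i
    simp only [projAdd₁, AddMonoidHom.mk'_apply, Pi.zero_apply]
    exact Pi.single_eq_of_ne (hne i) 1
  simp [projRing₁, AddMonoidAlgebra.mapDomain_single, h, AddMonoidAlgebra.one_def]

lemma projRing₁_surjective (n₁ n₂ : ℕ) : Function.Surjective (projRing₁ n₁ n₂) := by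
  classical
  intro y
  refine ⟨AddMonoidAlgebra.mapDomain
    (fun (m : Fin n₁ → ℤ) (i : Fin (n₁ + n₂)) =>
      if h : (i : ℕ) < n₁ then m ⟨i, h⟩ else 0) y, ?_⟩
  show AddMonoidAlgebra.mapDomain (⇑(projAdd₁ n₁ n₂)) _ = y
  rw [AddMonoidAlgebra.mapDomain, AddMonoidAlgebra.mapDomain, AddMonoidAlgebra.coeff_ofCoeff,
    ← Finsupp.mapDomain_comp]
  have h : ((projAdd₁ n₁ n₂) ∘ (fun (m : Fin n₁ → ℤ) (i : Fin (n₁ + n₂)) =>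
      if h : (i : ℕ) < n₁ then m ⟨i, h⟩ else 0)) = id := by
    funext m i
    simp [projAdd₁]
  rw [h, Finsupp.mapDomain_id, AddMonoidAlgebra.ofCoeff_coeff]

lemma projRing₂_surjective (n₁ n₂ : ℕ) : Function.Surjective (projRing₂ n₁ n₂) := by
  classical
  intro y
  refine ⟨AddMonoidAlgebra.mapDomain
    (fun (m : Fin n₂ → ℤ) (i : Fin (n₁ + n₂)) =>
      if h : n₁ ≤ (i : ℕ) then m ⟨(i : ℕ) - n₁, by omega⟩ else 0) y, ?_⟩
  show AddMonoidAlgebra.mapDomain (⇑(projAdd₂ n₁ n₂)) _ = y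
  rw [AddMonoidAlgebra.mapDomain, AddMonoidAlgebra.mapDomain, AddMonoidAlgebra.coeff_ofCoeff,
    ← Finsupp.mapDomain_comp]
  have h : ((projAdd₂ n₁ n₂) ∘ (fun (m : Fin n₂ → ℤ) (i : Fin (n₁ + n₂)) =>
      if h : n₁ ≤ (i : ℕ) then m ⟨(i : ℕ) - n₁, by omega⟩ else 0)) = id := by
    funext m j
    simp only [projAdd₂, AddMonoidHom.mk'_apply, Function.comp_apply, id_eq]
    rw [dif_pos (by simp [Fin.natAdd])]
    congr
    simp [Fin.natAdd]
  rw [h, Finsupp.mapDomain_id, AddMonoidAlgebra.ofCoeff_coeff]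
/-- **Product formula for characteristic varieties**:
`V_k(M₁ × M₂) = (V_k(M₁) × 1) ∪ (1 × V_k(M₂))`, stated away from the identity
character. -/
theorem characteristic_variety_product (n₁ n₂ : ℕ) (hn₁ : 1 ≤ n₁) (hn₂ : 1 ≤ n₂)
    (B₁ : Type) [AddCommGroup B₁] [Module (Lau n₁) B₁]
    (B₂ : Type) [AddCommGroup B₂] [Module (Lau n₂) B₂]
    (k : ℕ) (hk : 1 ≤ k)
    (t₁ : Fin n₁ → ℂˣ) (t₂ : Fin n₂ → ℂˣ) (ht : ¬ (t₁ = 1 ∧ t₂ = 1)) :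
    letI : Module (Lau (n₁ + n₂)) B₁ := Module.compHom B₁ (projRing₁ n₁ n₂)
    letI : Module (Lau (n₁ + n₂)) B₂ := Module.compHom B₂ (projRing₂ n₁ n₂)
    ((k : Cardinal) ≤ Module.rank ℂ
        (TensorProduct (Lau (n₁ + n₂))
          (CV (n₁ + n₂) (Fin.addCases (motive := fun _ => ℂˣ) t₁ t₂)) (B₁ × B₂)) ↔
      (t₂ = 1 ∧ (k : Cardinal) ≤ Module.rank ℂ (TensorProduct (Lau n₁) (CV n₁ t₁) B₁)) ∨
      (t₁ = 1 ∧ (k : Cardinal) ≤ Module.rank ℂ (TensorProduct (Lau n₂) (CV n₂ t₂) B₂))) := by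
  classical
  letI i1 : Module (Lau (n₁ + n₂)) B₁ := Module.compHom B₁ (projRing₁ n₁ n₂)
  letI i2 : Module (Lau (n₁ + n₂)) B₂ := Module.compHom B₂ (projRing₂ n₁ n₂)
  by_cases h₂ : t₂ = 1
  · subst h₂
    by_cases h₁ : t₁ = 1
    · exact absurd ⟨h₁, rfl⟩ ht
    · obtain ⟨i₀, hi₀⟩ := Function.ne_iff.mp h₁
      haveI hsub : Subsingleton (TensorProduct (Lau (n₁ + n₂))
          (CV (n₁ + n₂) (Fin.addCases (motive := fun _ => ℂˣ) t₁ 1)) B₂) := by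
        apply tensor_vanish (R := Lau (n₁ + n₂))
          (a := (AddMonoidAlgebra.single (Pi.single (Fin.castAdd n₂ i₀) (1 : ℤ)) (1 : ℂ) : Lau (n₁ + n₂)))
          (c := ((t₁ i₀ : ℂˣ) : ℂ))
        · intro h
          exact hi₀ (Units.val_eq_one.mp h)
        · intro x
          rw [CV_smul, eps_single_single, Fin.addCases_left]
        · intro b
          show projRing₂ n₁ n₂ _ • b = b
          rw [projRing₂_single₁, one_smul]
      obtain ⟨eprod⟩ := prodRightC (R := Lau (n₁ + n₂))
        (M := CV (n₁ + n₂) (Fin.addCases (motive := fun _ => ℂˣ) t₁ 1)) (B₁ := B₁) (B₂ := B₂)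
      obtain ⟨edrop⟩ := prod_fst_equiv
        (V := TensorProduct (Lau (n₁ + n₂))
          (CV (n₁ + n₂) (Fin.addCases (motive := fun _ => ℂˣ) t₁ 1)) B₁)
        (W := TensorProduct (Lau (n₁ + n₂))
          (CV (n₁ + n₂) (Fin.addCases (motive := fun _ => ℂˣ) t₁ 1)) B₂)
      obtain ⟨ecomp⟩ := @tensor_comp_equiv (Lau (n₁ + n₂)) (Lau n₁)
        (CV (n₁ + n₂) (Fin.addCases (motive := fun _ => ℂˣ) t₁ 1)) (CV n₁ t₁) B₁
        _ _ _ _ _ (instSMulCommClassLauComplexCV _ _) _ _ _ (instSMulCommClassLauComplexCV _ _) _ _ _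
        (projRing₁ n₁ n₂)
        (projRing₁_surjective n₁ n₂)
        ((LinearEquiv.refl ℂ ℂ :
          CV (n₁ + n₂) (Fin.addCases (motive := fun _ => ℂˣ) t₁ 1) ≃ₗ[ℂ] CV n₁ t₁))
        (fun r x => by
          show (epsHom (Fin.addCases (motive := fun _ => ℂˣ) t₁ 1) r : ℂ) • (x : ℂ)
            = (epsHom t₁ (projRing₁ n₁ n₂ r) : ℂ) • (x : ℂ)
          rw [eps_eq₁]
          rfl)
        (fun r b => rfl)
      have hrank := ((eprod.trans edrop).trans ecomp).rank_eq
      rw [hrank]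
      simp [h₁]
  · by_cases h₁ : t₁ = 1
    · subst h₁
      obtain ⟨j₀, hj₀⟩ := Function.ne_iff.mp h₂
      haveI hsub : Subsingleton (TensorProduct (Lau (n₁ + n₂))
          (CV (n₁ + n₂) (Fin.addCases (motive := fun _ => ℂˣ) 1 t₂)) B₁) := by
        apply tensor_vanish (R := Lau (n₁ + n₂))
          (a := (AddMonoidAlgebra.single (Pi.single (Fin.natAdd n₁ j₀) (1 : ℤ)) (1 : ℂ) : Lau (n₁ + n₂)))
          (c := ((t₂ j₀ : ℂˣ) : ℂ))
        · intro h
          exact hj₀ (Units.val_eq_one.mp h)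
        · intro x
          rw [CV_smul, eps_single_single, Fin.addCases_right]
        · intro b
          show projRing₁ n₁ n₂ _ • b = b
          rw [projRing₁_single₂, one_smul]
      obtain ⟨eprod⟩ := prodRightC (R := Lau (n₁ + n₂))
        (M := CV (n₁ + n₂) (Fin.addCases (motive := fun _ => ℂˣ) 1 t₂)) (B₁ := B₁) (B₂ := B₂)
      obtain ⟨edrop⟩ := prod_snd_equiv
        (V := TensorProduct (Lau (n₁ + n₂))
          (CV (n₁ + n₂) (Fin.addCases (motive := fun _ => ℂˣ) 1 t₂)) B₁)
        (W := TensorProduct (Lau (n₁ + n₂))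
          (CV (n₁ + n₂) (Fin.addCases (motive := fun _ => ℂˣ) 1 t₂)) B₂)
      obtain ⟨ecomp⟩ := @tensor_comp_equiv (Lau (n₁ + n₂)) (Lau n₂)
        (CV (n₁ + n₂) (Fin.addCases (motive := fun _ => ℂˣ) 1 t₂)) (CV n₂ t₂) B₂
        _ _ _ _ _ (instSMulCommClassLauComplexCV _ _) _ _ _ (instSMulCommClassLauComplexCV _ _) _ _ _
        (projRing₂ n₁ n₂)
        (projRing₂_surjective n₁ n₂)
        ((LinearEquiv.refl ℂ ℂ :
          CV (n₁ + n₂) (Fin.addCases (motive := fun _ => ℂˣ) 1 t₂) ≃ₗ[ℂ] CV n₂ t₂))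
        (fun r x => by
          show (epsHom (Fin.addCases (motive := fun _ => ℂˣ) 1 t₂) r : ℂ) • (x : ℂ)
            = (epsHom t₂ (projRing₂ n₁ n₂ r) : ℂ) • (x : ℂ)
          rw [eps_eq₂]
          rfl)
        (fun r b => rfl)
      have hrank := ((eprod.trans edrop).trans ecomp).rank_eq
      rw [hrank]
      simp [h₂]
    · obtain ⟨i₀, hi₀⟩ := Function.ne_iff.mp h₁
      obtain ⟨j₀, hj₀⟩ := Function.ne_iff.mp h₂
      haveI hsub₂ : Subsingleton (TensorProduct (Lau (n₁ + n₂))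
          (CV (n₁ + n₂) (Fin.addCases (motive := fun _ => ℂˣ) t₁ t₂)) B₂) := by
        apply tensor_vanish (R := Lau (n₁ + n₂))
          (a := (AddMonoidAlgebra.single (Pi.single (Fin.castAdd n₂ i₀) (1 : ℤ)) (1 : ℂ) : Lau (n₁ + n₂)))
          (c := ((t₁ i₀ : ℂˣ) : ℂ))
        · intro h
          exact hi₀ (Units.val_eq_one.mp h)
        · intro x
          rw [CV_smul, eps_single_single, Fin.addCases_left]
        · intro b
          show projRing₂ n₁ n₂ _ • b = b
          rw [projRing₂_single₁, one_smul]
      haveI hsub₁ : Subsingleton (TensorProduct (Lau (n₁ + n₂))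
          (CV (n₁ + n₂) (Fin.addCases (motive := fun _ => ℂˣ) t₁ t₂)) B₁) := by
        apply tensor_vanish (R := Lau (n₁ + n₂))
          (a := (AddMonoidAlgebra.single (Pi.single (Fin.natAdd n₁ j₀) (1 : ℤ)) (1 : ℂ) : Lau (n₁ + n₂)))
          (c := ((t₂ j₀ : ℂˣ) : ℂ))
        · intro h
          exact hj₀ (Units.val_eq_one.mp h)
        · intro x
          rw [CV_smul, eps_single_single, Fin.addCases_right]
        · intro b
          show projRing₁ n₁ n₂ _ • b = b
          rw [projRing₁_single₂, one_smul]
      obtain ⟨eprod⟩ := prodRightC (R := Lau (n₁ + n₂))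
        (M := CV (n₁ + n₂) (Fin.addCases (motive := fun _ => ℂˣ) t₁ t₂)) (B₁ := B₁) (B₂ := B₂)
      haveI hsubT : Subsingleton (TensorProduct (Lau (n₁ + n₂))
          (CV (n₁ + n₂) (Fin.addCases (motive := fun _ => ℂˣ) t₁ t₂)) (B₁ × B₂)) :=
        Equiv.subsingleton eprod.toEquiv
      have hrank := rank_subsingleton' ℂ (TensorProduct (Lau (n₁ + n₂))
          (CV (n₁ + n₂) (Fin.addCases (motive := fun _ => ℂˣ) t₁ t₂)) (B₁ × B₂))
      rw [hrank]
      simp only [h₁, h₂, false_and, or_self, iff_false, nonpos_iff_eq_zero, Nat.cast_eq_zero]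
      omega
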